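/- Let k ≥ 2 and q ≥ 1 be integers. The map φ restricted to W_{k,q} is a graph isomorphism from G''_k onto G_k: it is a bijection from W_{k,q} onto Δ_{k,q} ∩ ℤ^k, and for all distinct w¹, w² ∈ W_{k,q}, {w¹, w²} is an edge of G''_k if and only if {φ(w¹), φ(w²)} is an edge of G_k. -/

import Mathlib

open Finset

/-- Membership in the discrete simplex `Δ_{k,q} ∩ ℤ^k`:
integer vectors with nonnegative entries summing to `q`. -/
def inSimplex (k q : ℕ) (v : Fin k → ℤ) : Prop :=
  (∀ i, 0 ≤ v i) ∧ (∑ i, v i) = (q : ℤ)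

/-- The nonzero entries of `d`, read from left to right, alternate in sign. -/
def AltSign {k : ℕ} (d : Fin k → ℤ) : Prop :=
  ∀ i j : Fin k, i < j → d i ≠ 0 → d j ≠ 0 →
    (∀ l : Fin k, i < l → l < j → d l = 0) → d i = - d j

/-- Adjacency in the graph `G_k` on `Δ_{k,q} ∩ ℤ^k`. -/
def AdjG (k q : ℕ) (v w : Fin k → ℤ) : Prop :=
  v ≠ w ∧ inSimplex k q v ∧ inSimplex k q w ∧
    (∀ i, v i - w i = -1 ∨ v i - w i = 0 ∨ v i - w i = 1) ∧
    (Finset.univ.filter (fun i => v i - w i = 1)).card =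
      (Finset.univ.filter (fun i => v i - w i = -1)).card ∧
    AltSign (fun i => v i - w i)

/-- A cell of the regular triangulation `𝒯` of `Δ_{k,q}`: a `k`-element subset of
`Δ_{k,q} ∩ ℤ^k` whose elements are pairwise adjacent in `G_k`. -/
def IsCell (k q : ℕ) (S : Finset (Fin k → ℤ)) : Prop :=
  S.card = k ∧ (∀ v ∈ S, inSimplex k q v) ∧
    (∀ v ∈ S, ∀ w ∈ S, v ≠ w → AdjG k q v w)

/-- A Sperner labeling of `Δ_{k,q} ∩ ℤ^k`. -/
def IsSperner (k q : ℕ) (c : (Fin k → ℤ) → Fin k) : Prop :=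
  ∀ v : Fin k → ℤ, inSimplex k q v → ∀ i : Fin k, v i = 0 → c v ≠ i

/-- A cell is non-monochromatic for `c` if `c` takes at least two values on it. -/
def NonMono {k : ℕ} (c : (Fin k → ℤ) → Fin k) (S : Finset (Fin k → ℤ)) : Prop :=
  ∃ u ∈ S, ∃ v ∈ S, c u ≠ c v

/-- Membership in `W_{k,q} = R_{k,q} ∩ ℤ^{k-1}`. -/
def inW (k q : ℕ) (w : Fin (k-1) → ℤ) : Prop :=
  (∀ i, 0 ≤ w i) ∧ (∀ i, w i ≤ (q : ℤ)) ∧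
    ∀ i j : Fin (k-1), i ≤ j → w i ≤ w j

/-- A permutation `π` of `{1,…,k-1}` (here `Fin (k-1)`) is consistent with `w`
if `w i = w (i+1)` implies `π i < π (i+1)`. -/
def Consistent (k : ℕ) (w : Fin (k-1) → ℤ) (π : Equiv.Perm (Fin (k-1))) : Prop :=
  ∀ i j : Fin (k-1), (i : ℕ) + 1 = (j : ℕ) → w i = w j → π i < π j

/-- The simplex `σ(w,π) ⊆ ℝ^{k-1}`. -/
def simplexSet (k : ℕ) (w : Fin (k-1) → ℤ) (π : Equiv.Perm (Fin (k-1))) :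
    Set (Fin (k-1) → ℝ) :=
  {y | (∀ i, 0 ≤ y i) ∧
    (∀ s, 0 ≤ y (π s) - (w (π s) : ℝ)) ∧
    (∀ s, y (π s) - (w (π s) : ℝ) ≤ 1) ∧
    (∀ s t : Fin (k-1), s ≤ t →
      y (π s) - (w (π s) : ℝ) ≤ y (π t) - (w (π t) : ℝ))}

/-- Coercion of an integer vector to a real vector. -/
def toR {n : ℕ} (w : Fin n → ℤ) : Fin n → ℝ := fun i => (w i : ℝ)

/-- Adjacency in the graph `G'_k` on `W_{k,q}`. -/
def AdjG' (k q : ℕ) (w1 w2 : Fin (k-1) → ℤ) : Prop :=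
  w1 ≠ w2 ∧ inW k q w1 ∧ inW k q w2 ∧
    ∃ w : Fin (k-1) → ℤ, ∃ π : Equiv.Perm (Fin (k-1)),
      inW k q w ∧ Consistent k w π ∧
        toR w1 ∈ simplexSet k w π ∧ toR w2 ∈ simplexSet k w π

/-- Adjacency in the graph `G''_k` on `W_{k,q}`. -/
def AdjG'' (k q : ℕ) (w1 w2 : Fin (k-1) → ℤ) : Prop :=
  w1 ≠ w2 ∧ inW k q w1 ∧ inW k q w2 ∧
    ((∀ i, w1 i - w2 i = 0 ∨ w1 i - w2 i = 1) ∨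
      (∀ i, w1 i - w2 i = -1 ∨ w1 i - w2 i = 0))

/-- Auxiliary extension of `y : Fin (k-1) → ℤ` to `ℕ`, taking value `q` beyond `k-2`. -/
def extW (k q : ℕ) (y : Fin (k-1) → ℤ) : ℕ → ℤ := fun n =>
  if h : n < k - 1 then y ⟨n, h⟩ else (q : ℤ)

/-- The map `φ(y₁,…,y_{k-1}) = (y₁, y₂ - y₁, …, y_{k-1} - y_{k-2}, q - y_{k-1})`. -/
def phi (k q : ℕ) (y : Fin (k-1) → ℤ) : Fin k → ℤ := fun i =>
  extW k q y (i : ℕ) - (if (i : ℕ) = 0 then 0 else extW k q y ((i : ℕ) - 1))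

/-- The map `ψ(x₁,…,x_k) = (x₁, x₁+x₂, …, x₁+⋯+x_{k-1})`. -/
def psi (k : ℕ) (x : Fin k → ℤ) : Fin (k-1) → ℤ := fun j =>
  ∑ i ∈ Finset.univ.filter (fun i : Fin k => (i : ℕ) ≤ (j : ℕ)), x i

/-- Auxiliary extension of `y : Fin (k-1) → ℝ` to `ℕ`, taking value `q` beyond `k-2`. -/
def extWR (k q : ℕ) (y : Fin (k-1) → ℝ) : ℕ → ℝ := fun n =>
  if h : n < k - 1 then y ⟨n, h⟩ else (q : ℝ)

/-- The map `φ` extended to `ℝ^{k-1}` by the same formula. -/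
def phiR (k q : ℕ) (y : Fin (k-1) → ℝ) : Fin k → ℝ := fun i =>
  extWR k q y (i : ℕ) - (if (i : ℕ) = 0 then 0 else extWR k q y ((i : ℕ) - 1))

section Aux

lemma teleRange (f : ℕ → ℤ) : ∀ n : ℕ,
    ∑ i ∈ Finset.range (n+1), (f i - if i = 0 then 0 else f (i-1)) = f n := by
  intro n
  induction n with
  | zero => simp
  | succ n ih => rw [Finset.sum_range_succ, ih]; simp

lemma extW_ge (k q : ℕ) (w : Fin (k-1) → ℤ) {n : ℕ} (h : k - 1 ≤ n) :
    extW k q w n = (q : ℤ) := by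
  simp [extW, Nat.not_lt.mpr h]

lemma extW_lt (k q : ℕ) (w : Fin (k-1) → ℤ) {n : ℕ} (h : n < k - 1) :
    extW k q w n = w ⟨n, h⟩ := by
  simp [extW, h]

lemma gdef (k q : ℕ) (w : Fin (k-1) → ℤ) (i : Fin k) :
    phi k q w i = extW k q w ↑i - (if (i:ℕ) = 0 then 0 else extW k q w (↑i - 1)) := rfl

lemma g_zero (k q : ℕ) (hk : 2 ≤ k) (w : Fin (k-1) → ℤ) {n : ℕ} (h : k ≤ n) :
    extW k q w n - (if n = 0 then 0 else extW k q w (n - 1)) = 0 := by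
  have h0 : n ≠ 0 := by omega
  rw [if_neg h0, extW_ge k q w (by omega), extW_ge k q w (by omega), sub_self]

lemma filterSum (k : ℕ) (f : ℕ → ℤ) (hf : ∀ n, k ≤ n → f n = 0) (m : ℕ) :
    ∑ i ∈ Finset.univ.filter (fun i : Fin k => (i:ℕ) ≤ m), f ↑i
      = ∑ n ∈ Finset.range (m+1), f n := by
  rw [Finset.sum_filter]
  rw [Fin.sum_univ_eq_sum_range (fun n => if n ≤ m then f n else 0)]
  have h1 : ∑ n ∈ Finset.range k, (if n ≤ m then f n else 0)
      = ∑ n ∈ Finset.range (max k (m+1)), (if n ≤ m then f n else 0) :=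
    Finset.sum_subset (Finset.range_subset_range.mpr (le_max_left _ _))
      (fun x hx hnx => by
        have hkx : k ≤ x := by simp only [Finset.mem_range, not_lt] at hnx; exact hnx
        simp [hf x hkx])
  have h2 : ∑ n ∈ Finset.range (m+1), f n
      = ∑ n ∈ Finset.range (max k (m+1)), (if n ≤ m then f n else 0) := by
    have e1 : ∑ n ∈ Finset.range (m+1), f n
        = ∑ n ∈ Finset.range (m+1), (if n ≤ m then f n else 0) :=
      Finset.sum_congr rfl (fun x hx => by
        rw [if_pos (by simpa [Nat.lt_succ_iff] using hx)])
    rw [e1]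
    exact Finset.sum_subset (Finset.range_subset_range.mpr (le_max_right _ _))
      (fun x hx hnx => by
        rw [if_neg]; simp only [Finset.mem_range, not_lt] at hnx; omega)
  rw [h1, ← h2]

lemma sum_phi (k q : ℕ) (hk : 2 ≤ k) (w : Fin (k-1) → ℤ) :
    ∑ i, phi k q w i = (q : ℤ) := by
  rw [show (∑ i : Fin k, phi k q w i)
      = ∑ i : Fin k, ((fun n => extW k q w n - if n = 0 then 0 else extW k q w (n-1)) ↑i) from
    Finset.sum_congr rfl (fun i _ => rfl)]
  rw [Fin.sum_univ_eq_sum_range (fun n => extW k q w n - if n = 0 then 0 else extW k q w (n-1)) k]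
  have hk1 : k - 1 + 1 = k := by omega
  have ht := teleRange (fun n => extW k q w n) (k-1)
  rw [hk1] at ht
  rw [ht, extW_ge k q w (le_refl _)]

lemma partial_phi (k q : ℕ) (hk : 2 ≤ k) (w : Fin (k-1) → ℤ) (m : ℕ) :
    ∑ i ∈ Finset.univ.filter (fun i : Fin k => (i:ℕ) ≤ m), phi k q w i
      = extW k q w m := by
  have h := filterSum k (fun n => extW k q w n - if n = 0 then 0 else extW k q w (n-1))
    (fun n hn => g_zero k q hk w hn) m
  rw [show (∑ i ∈ Finset.univ.filter (fun i : Fin k => (i:ℕ) ≤ m), phi k q w i)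
      = ∑ i ∈ Finset.univ.filter (fun i : Fin k => (i:ℕ) ≤ m),
          ((fun n => extW k q w n - if n = 0 then 0 else extW k q w (n-1)) ↑i) from
    Finset.sum_congr rfl (fun i _ => rfl), h, teleRange]

lemma psi_phi (k q : ℕ) (hk : 2 ≤ k) (w : Fin (k-1) → ℤ) : psi k (phi k q w) = w := by
  funext j
  show ∑ i ∈ Finset.univ.filter (fun i : Fin k => (i:ℕ) ≤ (j:ℕ)), phi k q w i = w j
  rw [partial_phi k q hk w ↑j, extW_lt k q w j.isLt]

end Aux
section Aux2

lemma extW_nonneg (k q : ℕ) (w : Fin (k-1) → ℤ) (hw : inW k q w) (n : ℕ) :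
    0 ≤ extW k q w n := by
  unfold extW; split
  · exact hw.1 _
  · positivity

lemma extW_mono (k q : ℕ) (w : Fin (k-1) → ℤ) (hw : inW k q w) {a b : ℕ} (hab : a ≤ b) :
    extW k q w a ≤ extW k q w b := by
  by_cases hb : b < k - 1
  · have ha : a < k - 1 := by omega
    rw [extW_lt k q w ha, extW_lt k q w hb]
    exact hw.2.2 _ _ (by exact hab)
  · rw [extW_ge k q w (n := b) (by omega)]
    by_cases ha : a < k - 1
    · rw [extW_lt k q w ha]; exact hw.2.1 _
    · rw [extW_ge k q w (n := a) (by omega)]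

lemma phi_mem (k q : ℕ) (hk : 2 ≤ k) (w : Fin (k-1) → ℤ) (hw : inW k q w) :
    inSimplex k q (phi k q w) := by
  refine ⟨fun i => ?_, sum_phi k q hk w⟩
  rw [gdef]
  by_cases h0 : (i:ℕ) = 0
  · rw [if_pos h0, sub_zero]; exact extW_nonneg k q w hw _
  · rw [if_neg h0, sub_nonneg]; exact extW_mono k q w hw (by omega)

/-- padded version of `v` -/
def Fv (k : ℕ) (v : Fin k → ℤ) : ℕ → ℤ := fun n => if h : n < k then v ⟨n, h⟩ else 0

lemma Fv_coe (k : ℕ) (v : Fin k → ℤ) (i : Fin k) : Fv k v ↑i = v i := by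
  simp [Fv, i.isLt]

lemma Fv_nonneg (k q : ℕ) (v : Fin k → ℤ) (hv : inSimplex k q v) (n : ℕ) :
    0 ≤ Fv k v n := by
  unfold Fv; split
  · exact hv.1 _
  · exact le_refl 0

lemma psi_eq (k : ℕ) (v : Fin k → ℤ) (j : Fin (k-1)) :
    psi k v j = ∑ n ∈ Finset.range (↑j+1), Fv k v n := by
  show ∑ i ∈ Finset.univ.filter (fun i : Fin k => (i:ℕ) ≤ (j:ℕ)), v i = _
  rw [show (∑ i ∈ Finset.univ.filter (fun i : Fin k => (i:ℕ) ≤ (j:ℕ)), v i)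
      = ∑ i ∈ Finset.univ.filter (fun i : Fin k => (i:ℕ) ≤ (j:ℕ)), Fv k v ↑i from
    Finset.sum_congr rfl (fun i _ => (Fv_coe k v i).symm)]
  exact filterSum k (Fv k v) (fun n hn => dif_neg (by omega)) ↑j

lemma sum_Fv (k : ℕ) (v : Fin k → ℤ) :
    ∑ n ∈ Finset.range k, Fv k v n = ∑ i, v i := by
  rw [← Fin.sum_univ_eq_sum_range (Fv k v) k]
  exact Finset.sum_congr rfl (fun i _ => Fv_coe k v i)

lemma psi_inW (k q : ℕ) (hk : 2 ≤ k) (v : Fin k → ℤ) (hv : inSimplex k q v) :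
    inW k q (psi k v) := by
  refine ⟨fun j => ?_, fun j => ?_, fun i j hij => ?_⟩
  · rw [psi_eq]
    exact Finset.sum_nonneg (fun n _ => Fv_nonneg k q v hv n)
  · rw [psi_eq]
    have h1 : ∑ n ∈ Finset.range (↑j+1), Fv k v n ≤ ∑ n ∈ Finset.range k, Fv k v n :=
      Finset.sum_le_sum_of_subset_of_nonneg
        (Finset.range_subset_range.mpr (by have := j.isLt; omega))
        (fun n _ _ => Fv_nonneg k q v hv n)
    rw [sum_Fv, hv.2] at h1; exact h1
  · rw [psi_eq, psi_eq]
    exact Finset.sum_le_sum_of_subset_of_nonneg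
      (Finset.range_subset_range.mpr (by have : (i:ℕ) ≤ (j:ℕ) := hij; omega))
      (fun n _ _ => Fv_nonneg k q v hv n)

lemma extW_psi (k q : ℕ) (hk : 2 ≤ k) (v : Fin k → ℤ) (hv : inSimplex k q v) (n : ℕ) :
    extW k q (psi k v) n = ∑ m ∈ Finset.range (n+1), Fv k v m := by
  by_cases h : n < k - 1
  · rw [extW_lt k q _ h, psi_eq]
  · rw [extW_ge k q _ (by omega)]
    have h2 : ∑ m ∈ Finset.range k, Fv k v m = ∑ m ∈ Finset.range (n+1), Fv k v m :=
      Finset.sum_subset (Finset.range_subset_range.mpr (by omega))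
        (fun x hx hnx => dif_neg (by simp only [Finset.mem_range, not_lt] at hnx; omega))
    rw [← h2, sum_Fv, hv.2]

lemma phi_psi (k q : ℕ) (hk : 2 ≤ k) (v : Fin k → ℤ) (hv : inSimplex k q v) :
    phi k q (psi k v) = v := by
  funext i
  rw [gdef]
  by_cases h0 : (i:ℕ) = 0
  · rw [if_pos h0, sub_zero, extW_psi k q hk v hv, h0, Finset.sum_range_one]
    show Fv k v 0 = v i
    have : (0:ℕ) < k := by omega
    rw [show (0:ℕ) = (i:ℕ) from h0.symm, Fv_coe]
  · rw [if_neg h0, extW_psi k q hk v hv, extW_psi k q hk v hv]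
    have h1 : (i:ℕ) - 1 + 1 = (i:ℕ) := by omega
    rw [h1, Finset.sum_range_succ, Fv_coe]
    ring

end Aux2
section Aux3

/-- difference of extensions -/
def Dfun (k q : ℕ) (w1 w2 : Fin (k-1) → ℤ) : ℕ → ℤ :=
  fun n => extW k q w1 n - extW k q w2 n

lemma D_ge (k q : ℕ) (w1 w2 : Fin (k-1) → ℤ) {n : ℕ} (h : k - 1 ≤ n) :
    Dfun k q w1 w2 n = 0 := by
  unfold Dfun; rw [extW_ge k q w1 h, extW_ge k q w2 h, sub_self]

lemma D_lt (k q : ℕ) (w1 w2 : Fin (k-1) → ℤ) (i : Fin (k-1)) :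
    Dfun k q w1 w2 ↑i = w1 i - w2 i := by
  unfold Dfun; rw [extW_lt k q w1 i.isLt, extW_lt k q w2 i.isLt]

lemma e_eq (k q : ℕ) (w1 w2 : Fin (k-1) → ℤ) (i : Fin k) :
    phi k q w1 i - phi k q w2 i
      = Dfun k q w1 w2 ↑i - (if (i:ℕ) = 0 then 0 else Dfun k q w1 w2 (↑i - 1)) := by
  rw [gdef, gdef]; unfold Dfun
  by_cases h0 : (i:ℕ) = 0 <;> simp [h0] <;> ring

lemma cardEq {k : ℕ} (e : Fin k → ℤ) (he : ∀ i, e i = -1 ∨ e i = 0 ∨ e i = 1)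
    (hs : ∑ i, e i = 0) :
    (Finset.univ.filter (fun i => e i = 1)).card
      = (Finset.univ.filter (fun i => e i = -1)).card := by
  have h1 : ∑ i, e i = (∑ i : Fin k, if e i = 1 then (1:ℤ) else 0)
      - ∑ i : Fin k, if e i = -1 then (1:ℤ) else 0 := by
    rw [← Finset.sum_sub_distrib]
    refine Finset.sum_congr rfl fun i _ => ?_
    rcases he i with h | h | h <;> simp [h]
  rw [Finset.sum_boole, Finset.sum_boole, hs] at h1
  omega

lemma adjG_symm {k q : ℕ} (v w : Fin k → ℤ) (h : AdjG k q v w) : AdjG k q w v := by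
  obtain ⟨hne, hv, hw, hent, hcard, halt⟩ := h
  refine ⟨Ne.symm hne, hw, hv, fun i => by have := hent i; omega, ?_, ?_⟩
  · have e1 : Finset.univ.filter (fun i => w i - v i = 1)
        = Finset.univ.filter (fun i => v i - w i = -1) :=
      Finset.filter_congr (fun i _ => by constructor <;> intro h <;> omega)
    have e2 : Finset.univ.filter (fun i => w i - v i = -1)
        = Finset.univ.filter (fun i => v i - w i = 1) :=
      Finset.filter_congr (fun i _ => by constructor <;> intro h <;> omega)
    rw [e1, e2]; exact hcard.symm
  · intro i j hij hi hj hz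
    have hi' : v i - w i ≠ 0 := fun h => hi (show w i - v i = 0 by omega)
    have hj' : v j - w j ≠ 0 := fun h => hj (show w j - v j = 0 by omega)
    have hz' : ∀ l : Fin k, i < l → l < j → v l - w l = 0 := fun l h1 h2 => by
      have := hz l h1 h2; show v l - w l = 0
      have h3 : w l - v l = 0 := this
      omega
    have := halt i j hij hi' hj' hz'
    have h4 : v i - w i = -(v j - w j) := this
    show w i - v i = -(w j - v j)
    omega

lemma fwd (k q : ℕ) (hk : 2 ≤ k) (w1 w2 : Fin (k-1) → ℤ)
    (hw1 : inW k q w1) (hw2 : inW k q w2) (hne : w1 ≠ w2)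
    (hd : ∀ i, w1 i - w2 i = 0 ∨ w1 i - w2 i = 1) :
    AdjG k q (phi k q w1) (phi k q w2) := by
  have hDval : ∀ n, Dfun k q w1 w2 n = 0 ∨ Dfun k q w1 w2 n = 1 := by
    intro n
    by_cases h : n < k - 1
    · rw [show n = ((⟨n, h⟩ : Fin (k-1)) : ℕ) from rfl, D_lt]; exact hd _
    · left; exact D_ge k q w1 w2 (by omega)
  have hphine : phi k q w1 ≠ phi k q w2 := fun h =>
    hne (by rw [← psi_phi k q hk w1, ← psi_phi k q hk w2, h])
  have hent : ∀ i : Fin k, phi k q w1 i - phi k q w2 i = -1 ∨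
      phi k q w1 i - phi k q w2 i = 0 ∨ phi k q w1 i - phi k q w2 i = 1 := by
    intro i
    rw [e_eq]
    by_cases h0 : (i:ℕ) = 0
    · rw [if_pos h0, sub_zero]; rcases hDval ↑i with h | h <;> omega
    · rw [if_neg h0]
      rcases hDval ↑i with h | h <;> rcases hDval (↑i - 1) with h' | h' <;> omega
  have hsum : ∑ i : Fin k, (phi k q w1 i - phi k q w2 i) = 0 := by
    rw [Finset.sum_sub_distrib, sum_phi k q hk w1, sum_phi k q hk w2, sub_self]
  refine ⟨hphine, phi_mem k q hk w1 hw1, phi_mem k q hk w2 hw2, hent,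
    cardEq (fun i => phi k q w1 i - phi k q w2 i) hent hsum, ?_⟩
  intro i j hij hi hj hz
  have hij' : (i:ℕ) < (j:ℕ) := hij
  have hi' : phi k q w1 i - phi k q w2 i ≠ 0 := hi
  have hj' : phi k q w1 j - phi k q w2 j ≠ 0 := hj
  have hconst : ∀ m, (i:ℕ) ≤ m → m ≤ (j:ℕ) - 1 → Dfun k q w1 w2 m = Dfun k q w1 w2 ↑i := by
    intro m
    induction m with
    | zero =>
      intro him _
      have h0 : (i:ℕ) = 0 := by omega
      rw [h0]
    | succ m ih =>
      intro him hmj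
      by_cases hc : (i:ℕ) ≤ m
      · have h1 := ih hc (by omega)
        have hm1k : m + 1 < k := by have := j.isLt; omega
        have hzl := hz ⟨m+1, hm1k⟩ (show (i:ℕ) < m+1 by omega) (show m+1 < (j:ℕ) by omega)
        have hzl' : phi k q w1 ⟨m+1, hm1k⟩ - phi k q w2 ⟨m+1, hm1k⟩ = 0 := hzl
        rw [e_eq] at hzl'
        simp only [Fin.val_mk, Nat.add_sub_cancel, Nat.succ_ne_zero, if_false] at hzl'
        have : Dfun k q w1 w2 (m+1) = Dfun k q w1 w2 m := by omega
        rw [this, h1]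
      · have : (i:ℕ) = m + 1 := by omega
        rw [this]
  have hDj1 : Dfun k q w1 w2 ((j:ℕ) - 1) = Dfun k q w1 w2 ↑i :=
    hconst _ (by omega) (le_refl _)
  have hej : phi k q w1 j - phi k q w2 j = Dfun k q w1 w2 ↑j - Dfun k q w1 w2 ↑i := by
    rw [e_eq, if_neg (by omega : ¬ (j:ℕ) = 0), hDj1]
  show phi k q w1 i - phi k q w2 i = -(phi k q w1 j - phi k q w2 j)
  by_cases h0 : (i:ℕ) = 0
  · have hei : phi k q w1 i - phi k q w2 i = Dfun k q w1 w2 ↑i := by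
      rw [e_eq, if_pos h0, sub_zero]
    rcases hDval ↑i with h | h <;> rcases hDval ↑j with h' | h' <;> omega
  · have hei : phi k q w1 i - phi k q w2 i
        = Dfun k q w1 w2 ↑i - Dfun k q w1 w2 ((i:ℕ) - 1) := by
      rw [e_eq, if_neg h0]
    rcases hDval ↑i with h | h <;> rcases hDval ((i:ℕ) - 1) with h'' | h'' <;>
      rcases hDval ↑j with h' | h' <;> omega

end Aux3
section Aux4

lemma rev (k q : ℕ) (hk : 2 ≤ k) (w1 w2 : Fin (k-1) → ℤ)
    (hent : ∀ i : Fin k, phi k q w1 i - phi k q w2 i = -1 ∨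
      phi k q w1 i - phi k q w2 i = 0 ∨ phi k q w1 i - phi k q w2 i = 1)
    (halt : AltSign (fun i => phi k q w1 i - phi k q w2 i)) :
    (∀ i, w1 i - w2 i = 0 ∨ w1 i - w2 i = 1) ∨
      (∀ i, w1 i - w2 i = -1 ∨ w1 i - w2 i = 0) := by
  set D := Dfun k q w1 w2 with hDdef
  by_cases hall : ∀ i : Fin k, phi k q w1 i - phi k q w2 i = 0
  · left
    have key : ∀ n, D n = 0 := by
      intro n
      induction n with
      | zero =>
        have h0 := hall ⟨0, by omega⟩
        rw [e_eq] at h0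
        simpa using h0
      | succ n ih =>
        by_cases h : n + 1 < k
        · have h0 := hall ⟨n+1, h⟩
          rw [e_eq] at h0
          simp only [Fin.val_mk, Nat.add_sub_cancel, Nat.succ_ne_zero, if_false] at h0
          rw [hDdef] at ih ⊢
          omega
        · exact D_ge k q w1 w2 (by omega)
    intro i
    left
    rw [← D_lt k q w1 w2 i]
    exact key ↑i
  · push_neg at hall
    obtain ⟨iex, hiex⟩ := hall
    set S := Finset.univ.filter (fun i : Fin k => phi k q w1 i - phi k q w2 i ≠ 0) with hSdef
    have hSne : S.Nonempty := ⟨iex, Finset.mem_filter.mpr ⟨Finset.mem_univ _, hiex⟩⟩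
    set i0 := S.min' hSne with hi0def
    have hi0 : phi k q w1 i0 - phi k q w2 i0 ≠ 0 :=
      (Finset.mem_filter.mp (S.min'_mem hSne)).2
    have hmin : ∀ l : Fin k, phi k q w1 l - phi k q w2 l ≠ 0 → i0 ≤ l := fun l hl =>
      S.min'_le l (Finset.mem_filter.mpr ⟨Finset.mem_univ _, hl⟩)
    set s := phi k q w1 i0 - phi k q w2 i0 with hsdef
    have hs : s = -1 ∨ s = 1 := by
      rcases hent i0 with h | h | h
      · exact Or.inl h
      · exact absurd h hi0
      · exact Or.inr h
    have hsne : s ≠ 0 := hi0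
    have inv : ∀ n : ℕ,
        (D n = 0 ∧ ∀ l : Fin k, (l:ℕ) ≤ n → phi k q w1 l - phi k q w2 l = 0)
        ∨ (D n = 0 ∧ ∃ m : Fin k, (m:ℕ) ≤ n ∧ phi k q w1 m - phi k q w2 m = -s ∧
             ∀ l : Fin k, m < l → (l:ℕ) ≤ n → phi k q w1 l - phi k q w2 l = 0)
        ∨ (D n = s ∧ ∃ m : Fin k, (m:ℕ) ≤ n ∧ phi k q w1 m - phi k q w2 m = s ∧
             ∀ l : Fin k, m < l → (l:ℕ) ≤ n → phi k q w1 l - phi k q w2 l = 0) := by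
      intro n
      induction n with
      | zero =>
        have hk0 : (0:ℕ) < k := by omega
        have hD0 : phi k q w1 ⟨0, hk0⟩ - phi k q w2 ⟨0, hk0⟩ = D 0 := by
          rw [e_eq]; simp; rfl
        by_cases hz : phi k q w1 ⟨0, hk0⟩ - phi k q w2 ⟨0, hk0⟩ = 0
        · left
          refine ⟨by rw [← hD0]; exact hz, fun l hl => ?_⟩
          have : l = ⟨0, hk0⟩ := Fin.ext (by simp only [Fin.val_mk]; omega)
          rw [this]; exact hz
        · have hiz : i0 = ⟨0, hk0⟩ :=
            le_antisymm (hmin _ hz) (Fin.le_def.mpr (Nat.zero_le _))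
          right; right
          refine ⟨?_, ⟨0, hk0⟩, le_refl _, by rw [hsdef, hiz], fun l hl1 hl2 => ?_⟩
          · rw [← hD0, hsdef, hiz]
          · exfalso
            have : (0:ℕ) < (l:ℕ) := hl1
            omega
      | succ n ih =>
        by_cases hk1 : n + 1 < k
        · set jf : Fin k := ⟨n+1, hk1⟩ with hjfdef
          have hej : phi k q w1 jf - phi k q w2 jf = D (n+1) - D n := by
            rw [e_eq]
            simp only [hjfdef, Fin.val_mk, Nat.add_sub_cancel, Nat.succ_ne_zero, if_false]; rfl
          by_cases hz : phi k q w1 jf - phi k q w2 jf = 0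
          · have hDeq : D (n+1) = D n := by omega
            have ext0 : ∀ (P : Fin k → Prop),
                (∀ l : Fin k, P l → (l:ℕ) ≤ n → phi k q w1 l - phi k q w2 l = 0) →
                ∀ l : Fin k, P l → (l:ℕ) ≤ n + 1 → phi k q w1 l - phi k q w2 l = 0 := by
              intro P hold l hPl hl
              by_cases hc : (l:ℕ) ≤ n
              · exact hold l hPl hc
              · have : l = jf := Fin.ext (by simp [hjfdef]; omega)
                rw [this]; exact hz
            rcases ih with ⟨h1, h2⟩ | ⟨h1, m, hm1, hm2, hm3⟩ | ⟨h1, m, hm1, hm2, hm3⟩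
            · exact Or.inl ⟨hDeq.trans h1,
                fun l hl => ext0 (fun _ => True) (fun l _ hl => h2 l hl) l trivial hl⟩
            · exact Or.inr (Or.inl ⟨hDeq.trans h1, m, by omega, hm2,
                ext0 (fun l => m < l) hm3⟩)
            · exact Or.inr (Or.inr ⟨hDeq.trans h1, m, by omega, hm2,
                ext0 (fun l => m < l) hm3⟩)
          · have hvac : ∀ l : Fin k, jf < l → (l:ℕ) ≤ n + 1 →
                phi k q w1 l - phi k q w2 l = 0 := by
              intro l hl1 hl2
              exfalso
              have : (n:ℕ) + 1 < (l:ℕ) := hl1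
              omega
            rcases ih with ⟨h1, h2⟩ | ⟨h1, m, hm1, hm2, hm3⟩ | ⟨h1, m, hm1, hm2, hm3⟩
            · -- first nonzero is at jf, so it equals s
              have hij : i0 = jf := by
                have hle : i0 ≤ jf := hmin jf hz
                have hge : jf ≤ i0 := by
                  by_contra hc
                  push_neg at hc
                  have : (i0:ℕ) ≤ n := by
                    have : (i0:ℕ) < n + 1 := hc
                    omega
                  exact hi0 (h2 i0 this)
                exact le_antisymm hle hge
              have hejs : phi k q w1 jf - phi k q w2 jf = s := by
                rw [hsdef, hij]
              exact Or.inr (Or.inr ⟨by omega, jf, le_refl _, hejs, hvac⟩)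
            · have hlt : m < jf := by
                show (m:ℕ) < (jf:ℕ)
                simp only [hjfdef, Fin.val_mk]
                omega
              have hmz : phi k q w1 m - phi k q w2 m ≠ 0 := by
                rw [hm2]; intro hcon; rcases hs with h | h <;> rw [h] at hcon <;> norm_num at hcon
              have halt' := halt m jf hlt hmz hz
                (fun l hl1 hl2 => hm3 l hl1 (by
                  have : (l:ℕ) < n + 1 := hl2
                  omega))
              have halt'' : phi k q w1 m - phi k q w2 m
                  = -(phi k q w1 jf - phi k q w2 jf) := halt'
              have hejs : phi k q w1 jf - phi k q w2 jf = s := by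
                rw [hm2] at halt''; omega
              exact Or.inr (Or.inr ⟨by omega, jf, le_refl _, hejs, hvac⟩)
            · have hlt : m < jf := by
                show (m:ℕ) < (jf:ℕ)
                simp only [hjfdef, Fin.val_mk]
                omega
              have hmz : phi k q w1 m - phi k q w2 m ≠ 0 := by
                rw [hm2]; exact hsne
              have halt' := halt m jf hlt hmz hz
                (fun l hl1 hl2 => hm3 l hl1 (by
                  have : (l:ℕ) < n + 1 := hl2
                  omega))
              have halt'' : phi k q w1 m - phi k q w2 m
                  = -(phi k q w1 jf - phi k q w2 jf) := halt'
              have hejs : phi k q w1 jf - phi k q w2 jf = -s := by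
                rw [hm2] at halt''; omega
              exact Or.inr (Or.inl ⟨by omega, jf, le_refl _, hejs, hvac⟩)
        · have hDn1 : D (n+1) = 0 := D_ge k q w1 w2 (by omega)
          have hDn : D n = 0 := D_ge k q w1 w2 (by omega)
          have hlall : ∀ l : Fin k, (l:ℕ) ≤ n := fun l => by have := l.isLt; omega
          rcases ih with ⟨h1, h2⟩ | ⟨h1, m, hm1, hm2, hm3⟩ | ⟨h1, m, hm1, hm2, hm3⟩
          · exact Or.inl ⟨hDn1, fun l _ => h2 l (hlall l)⟩
          · exact Or.inr (Or.inl ⟨hDn1, m, by omega, hm2,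
              fun l hl _ => hm3 l hl (hlall l)⟩)
          · exfalso
            rw [hDn] at h1
            exact hsne h1.symm
    have hDval : ∀ n, D n = 0 ∨ D n = s := by
      intro n
      rcases inv n with ⟨h, _⟩ | ⟨h, _⟩ | ⟨h, _⟩
      · exact Or.inl h
      · exact Or.inl h
      · exact Or.inr h
    rcases hs with hs1 | hs1
    · right
      intro i
      have := hDval ↑i
      rw [hDdef, D_lt k q w1 w2 i, hs1] at this
      omega
    · left
      intro i
      have := hDval ↑i
      rw [hDdef, D_lt k q w1 w2 i, hs1] at this
      omega

end Aux4
/-- `φ` restricted to `W_{k,q}` is a graph isomorphism from `G''_k`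
onto `G_k`: it is a bijection from `W_{k,q}` onto `Δ_{k,q} ∩ ℤ^k`, and distinct
`w¹, w²` are adjacent in `G''_k` iff `φ(w¹), φ(w²)` are adjacent in `G_k`. -/
theorem phi_graph_iso (k q : ℕ) (hk : 2 ≤ k) (hq : 1 ≤ q) :
    Set.BijOn (phi k q) {w : Fin (k-1) → ℤ | inW k q w}
      {v : Fin k → ℤ | inSimplex k q v} ∧
    ∀ w1 w2 : Fin (k-1) → ℤ, inW k q w1 → inW k q w2 → w1 ≠ w2 →
      (AdjG'' k q w1 w2 ↔ AdjG k q (phi k q w1) (phi k q w2)) := by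
  constructor
  · refine ⟨fun w hw => phi_mem k q hk w hw, ?_, ?_⟩
    · intro a ha b hb h
      rw [← psi_phi k q hk a, ← psi_phi k q hk b, h]
    · intro v hv
      exact ⟨psi k v, psi_inW k q hk v hv, phi_psi k q hk v hv⟩
  · intro w1 w2 hw1 hw2 hne
    constructor
    · rintro ⟨-, -, -, hd | hd⟩
      · exact fwd k q hk w1 w2 hw1 hw2 hne hd
      · exact adjG_symm _ _ (fwd k q hk w2 w1 hw2 hw1 hne.symm
          (fun i => by have := hd i; omega))
    · rintro ⟨-, -, -, hent, -, halt⟩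
      exact ⟨hne, hw1, hw2, rev k q hk w1 w2 hent halt⟩
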